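/- arXiv:1809.09042 — 4 statements merged into one kernel-verified Lean document; each statement's English description precedes it below -/
import Mathlib

section
/- If sup_{x∈K} V(x) ≤ τ almost surely and T_τ < ∞ almost surely, then the threshold-stopped approximation is exact: almost surely Z^{(T_τ)}(x) = Z(x) for all x ∈ K. -/
open MeasureTheory ProbabilityTheory Filter
open scoped ENNReal

noncomputable section

namespace MaxStableSim

variable {Ω : Type*} [MeasurableSpace Ω]
variable {K : Type*} [MetricSpace K] [CompactSpace K] [Nonempty K]

/-- Arrival times of the unit rate Poisson process: `Γ n = E 0 + ⋯ + E (n-1)`,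
so that `Γ (j+1)` is the `(j+1)`-st arrival time. -/
def arrivals (E : ℕ → Ω → ℝ) (n : ℕ) (ω : Ω) : ℝ :=
  ∑ j ∈ Finset.range n, E j ω

/-- The `j`-th function `Γ_{j+1}⁻¹ V_j(x)` of the Poisson point process, valued in `[0,∞]`. -/
def fn (E : ℕ → Ω → ℝ) (Vs : ℕ → Ω → C(K, ℝ)) (j : ℕ) (ω : Ω) (x : K) : ℝ≥0∞ :=
  ENNReal.ofReal ((arrivals E (j + 1) ω)⁻¹ * Vs j ω x)

/-- The simple max-stable process `Z(x) = sup_{j ∈ ℕ} Γ_j⁻¹ V_j(x)`. -/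
def Z (E : ℕ → Ω → ℝ) (Vs : ℕ → Ω → C(K, ℝ)) (ω : Ω) (x : K) : ℝ≥0∞ :=
  ⨆ j : ℕ, fn E Vs j ω x

/-- The partial maxima `Z^{(m)}(x) = max_{1 ≤ j ≤ m} Γ_j⁻¹ V_j(x)` (zero for `m = 0`). -/
def Zpart (E : ℕ → Ω → ℝ) (Vs : ℕ → Ω → C(K, ℝ)) (m : ℕ) (ω : Ω) (x : K) : ℝ≥0∞ :=
  ⨆ j ∈ Finset.range m, fn E Vs j ω x

/-- The set of indices `m` at which the threshold stopping criterion
`Γ_{m+1}⁻¹ τ < inf_{x ∈ K} Z^{(m)}(x)` holds. -/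
def stopSet (E : ℕ → Ω → ℝ) (Vs : ℕ → Ω → C(K, ℝ)) (τ : ℝ) (ω : Ω) : Set ℕ :=
  {m : ℕ | ENNReal.ofReal (τ * (arrivals E (m + 1) ω)⁻¹) < ⨅ x, Zpart E Vs m ω x}

/-- The threshold stopping time `T_τ`, valued in `[0,∞]` (equal to `∞` if the
stopping criterion never holds). -/
def T (E : ℕ → Ω → ℝ) (Vs : ℕ → Ω → C(K, ℝ)) (τ : ℝ) (ω : Ω) : ℝ≥0∞ :=
  ⨅ m ∈ stopSet E Vs τ ω, (m : ℝ≥0∞)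

/-- The threshold stopping time as a natural number (junk value `sInf ∅ = 0`
if the stopping criterion never holds). -/
def Tnat (E : ℕ → Ω → ℝ) (Vs : ℕ → Ω → C(K, ℝ)) (τ : ℝ) (ω : Ω) : ℕ :=
  sInf (stopSet E Vs τ ω)

/-- The threshold-stopped process `Z^{(T_τ)}`. -/
def Zstop (E : ℕ → Ω → ℝ) (Vs : ℕ → Ω → C(K, ℝ)) (τ : ℝ) (ω : Ω) (x : K) : ℝ≥0∞ :=
  Zpart E Vs (Tnat E Vs τ ω) ω x


lemma expMeasure_Iic_zero : expMeasure 1 (Set.Iic 0) = 0 := by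
  rw [expMeasure, gammaMeasure, withDensity_apply _ measurableSet_Iic]
  rw [setLIntegral_congr (Iio_ae_eq_Iic (a := (0:ℝ))).symm]
  exact lintegral_gammaPDF_of_nonpos le_rfl

lemma ae_pos_of_expMeasure {f : Ω → ℝ} (μ : Measure Ω) (hf : Measurable f)
    (h : Measure.map f μ = expMeasure 1) : ∀ᵐ ω ∂μ, 0 < f ω := by
  have : μ (f ⁻¹' Set.Iic 0) = 0 := by
    rw [← Measure.map_apply hf measurableSet_Iic, h, expMeasure_Iic_zero]
  filter_upwards [measure_eq_zero_iff_ae_notMem.mp this] with ω hω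
  simpa [not_le] using hω

/-- If `sup_{x ∈ K} V(x) ≤ τ` almost surely and `T_τ < ∞` almost
surely, then the threshold-stopped approximation is exact: almost surely
`Z^{(T_τ)}(x) = Z(x)` for all `x ∈ K`. -/
theorem threshold_stopping_exact_of_bounded
    (μ : Measure Ω) [IsProbabilityMeasure μ]
    [MeasurableSpace C(K, ℝ)] [BorelSpace C(K, ℝ)]
    (E : ℕ → Ω → ℝ) (hEmeas : ∀ j, Measurable (E j))
    (hEindep : iIndepFun E μ)
    (hEexp : ∀ j, Measure.map (E j) μ = expMeasure 1)
    (V0 : Ω → C(K, ℝ)) (hV0meas : Measurable V0)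
    (hV0nn : ∀ ω x, 0 ≤ V0 ω x)
    (hV0mean : ∀ x, ∫⁻ ω, ENNReal.ofReal (V0 ω x) ∂μ = 1)
    (Vs : ℕ → Ω → C(K, ℝ)) (hVmeas : ∀ j, Measurable (Vs j))
    (hVindep : iIndepFun Vs μ)
    (hVcopies : ∀ j, IdentDistrib (Vs j) V0 μ μ)
    (hVnn : ∀ j ω x, 0 ≤ Vs j ω x)
    (hEV : IndepFun (fun ω j => E j ω) (fun ω j => Vs j ω) μ)
    (hZfin : ∀ᵐ ω ∂μ, ∀ x, Z E Vs ω x < ⊤)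
    (hZcont : ∀ᵐ ω ∂μ, Continuous fun x => Z E Vs ω x)
    (τ : ℝ) (hτ : 0 < τ)
    (hVbound : ∀ᵐ ω ∂μ, ∀ x, V0 ω x ≤ τ)
    (hTfin : ∀ᵐ ω ∂μ, (stopSet E Vs τ ω).Nonempty) :
    ∀ᵐ ω ∂μ, ∀ x, Zstop E Vs τ ω x = Z E Vs ω x := by
  -- a.s. all E j are positive
  have hEpos : ∀ᵐ ω ∂μ, ∀ j, 0 < E j ω :=
    ae_all_iff.mpr fun j => ae_pos_of_expMeasure μ (hEmeas j) (hEexp j)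
  -- a.s. all Vs j are bounded by τ
  have hSclosed : IsClosed {f : C(K, ℝ) | ∀ x, f x ≤ τ} := by
    have : {f : C(K, ℝ) | ∀ x, f x ≤ τ} = ⋂ x, {f : C(K, ℝ) | f x ≤ τ} := by
      ext f; simp
    rw [this]
    exact isClosed_iInter fun x =>
      isClosed_le (continuous_eval_const x) continuous_const
  have hVsbound : ∀ᵐ ω ∂μ, ∀ j x, Vs j ω x ≤ τ := by
    rw [ae_all_iff]
    intro j
    have hm : MeasurableSet {f : C(K, ℝ) | ∀ x, f x ≤ τ} := hSclosed.measurableSet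
    have h0 : μ (V0 ⁻¹' {f : C(K, ℝ) | ∀ x, f x ≤ τ}ᶜ) = 0 := ae_iff.mp hVbound
    have := (hVcopies j).measure_mem_eq hm.compl
    exact ae_iff.mpr (this.trans h0)
  filter_upwards [hEpos, hVsbound, hTfin] with ω hE hV hT
  intro x
  set m := Tnat E Vs τ ω with hm
  have hmem : m ∈ stopSet E Vs τ ω := Nat.sInf_mem hT
  -- arrivals are positive and monotone
  have harr_pos : ∀ n, 0 < arrivals E (n + 1) ω := fun n =>
    Finset.sum_pos (fun j _ => hE j) (by simp)
  have harr_mono : ∀ {a b : ℕ}, a ≤ b → arrivals E (a + 1) ω ≤ arrivals E (b + 1) ω := by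
    intro a b hab
    exact Finset.sum_le_sum_of_subset_of_nonneg
      (Finset.range_subset_range.mpr (by omega)) (fun j _ _ => (hE j).le)
  refine le_antisymm (iSup₂_le fun j _ => le_iSup (fun j => fn E Vs j ω x) j) ?_
  refine iSup_le fun j => ?_
  rcases lt_or_ge j m with hj | hj
  · exact le_iSup₂ (f := fun j (_ : j ∈ Finset.range m) => fn E Vs j ω x) j
      (Finset.mem_range.mpr hj)
  · -- j ≥ m : fn j ≤ τ * Γ_{m+1}⁻¹ < Zpart m x
    have h1 : fn E Vs j ω x ≤ ENNReal.ofReal (τ * (arrivals E (m + 1) ω)⁻¹) := by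
      apply ENNReal.ofReal_le_ofReal
      rw [mul_comm τ]
      have hinv : (arrivals E (j + 1) ω)⁻¹ ≤ (arrivals E (m + 1) ω)⁻¹ :=
        inv_anti₀ (harr_pos m) (harr_mono hj)
      exact mul_le_mul hinv (hV j x) (hVnn j ω x)
        (inv_nonneg.mpr (harr_pos m).le)
    have h2 : ENNReal.ofReal (τ * (arrivals E (m + 1) ω)⁻¹) ≤ Zpart E Vs m ω x :=
      le_trans hmem.le (iInf_le _ x)
    exact h1.trans h2


end MaxStableSim
end
end

section
/- Assume min_{1≤i≤N} V(x_i) > 0 almost surely, and that N_X and N_Γ are almost surely finite. Then almost surely, for every n > max{N_X, N_Γ, N_a} and every i ∈ {1,…,N}, one has Γ_n^{-1} V_n(x_i) < Γ_1^{-1} min_{1≤i'≤N} V_1(x_{i'}); consequently, with M = max{N_X, N_Γ, N_a, 1}, almost surely Z^{(M)}(x_i) = Z(x_i) for all i ∈ {1,…,N}, i.e. the record-breakers truncation reproduces the max-stable process exactly on {x_1,…,x_N}. -/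
open MeasureTheory ProbabilityTheory Filter
open scoped ENNReal

noncomputable section

namespace MaxStableSimFin

variable {Ω : Type*} [MeasurableSpace Ω] {N : ℕ}

/-- Arrival times of the unit rate Poisson process: `Γ n = E 0 + ⋯ + E (n-1)`,
so that `Γ (j+1)` is the `(j+1)`-st arrival time. -/
def arrivals (E : ℕ → Ω → ℝ) (n : ℕ) (ω : Ω) : ℝ :=
  ∑ j ∈ Finset.range n, E j ω

/-- The `j`-th function `Γ_{j+1}⁻¹ V_j(x_k)` of the Poisson point process, valued in `[0,∞]`. -/
def fn (E : ℕ → Ω → ℝ) (Vs : ℕ → Ω → Fin N → ℝ) (j : ℕ) (ω : Ω) (k : Fin N) : ℝ≥0∞ :=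
  ENNReal.ofReal ((arrivals E (j + 1) ω)⁻¹ * Vs j ω k)

/-- The simple max-stable process `Z(x_k) = sup_{j ∈ ℕ} Γ_j⁻¹ V_j(x_k)`. -/
def Z (E : ℕ → Ω → ℝ) (Vs : ℕ → Ω → Fin N → ℝ) (ω : Ω) (k : Fin N) : ℝ≥0∞ :=
  ⨆ j : ℕ, fn E Vs j ω k

/-- The partial maxima `Z^{(m)}(x_k) = max_{1 ≤ j ≤ m} Γ_j⁻¹ V_j(x_k)` (zero for `m = 0`). -/
def Zpart (E : ℕ → Ω → ℝ) (Vs : ℕ → Ω → Fin N → ℝ) (m : ℕ) (ω : Ω) (k : Fin N) : ℝ≥0∞ :=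
  ⨆ j ∈ Finset.range m, fn E Vs j ω k

/-- The set of indices `m` at which the threshold stopping criterion
`Γ_{m+1}⁻¹ τ < min_{1 ≤ k ≤ N} Z^{(m)}(x_k)` holds. -/
def stopSet (E : ℕ → Ω → ℝ) (Vs : ℕ → Ω → Fin N → ℝ) (τ : ℝ) (ω : Ω) : Set ℕ :=
  {m : ℕ | ENNReal.ofReal (τ * (arrivals E (m + 1) ω)⁻¹) < ⨅ k, Zpart E Vs m ω k}

/-- The threshold stopping time `T_τ`, valued in `[0,∞]` (equal to `∞` if the
stopping criterion never holds). -/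
def T (E : ℕ → Ω → ℝ) (Vs : ℕ → Ω → Fin N → ℝ) (τ : ℝ) (ω : Ω) : ℝ≥0∞ :=
  ⨅ m ∈ stopSet E Vs τ ω, (m : ℝ≥0∞)

/-- The record-breaking times for the spectral processes: indices `n ≥ 1` with
`max_{1 ≤ i ≤ N} V_n(x_i) > n^a exp(C)`. -/
def recordSetX (Vs : ℕ → Ω → Fin N → ℝ) (a Creg : ℝ) (ω : Ω) : Set ℕ :=
  {n : ℕ | 0 < n ∧ (n : ℝ) ^ a * Real.exp Creg < ⨆ k, Vs (n - 1) ω k}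

/-- `N_X = sup{n : max_i V_n(x_i) > n^a exp(C)}` (with `sup ∅ = 0`). -/
def NX (Vs : ℕ → Ω → Fin N → ℝ) (a Creg : ℝ) (ω : Ω) : ℕ :=
  sSup (recordSetX Vs a Creg ω)

/-- The times at which the random walk `Γ_n − cn` is nonpositive. -/
def recordSetG (E : ℕ → Ω → ℝ) (c : ℝ) (ω : Ω) : Set ℕ :=
  {n : ℕ | 0 < n ∧ arrivals E n ω ≤ c * n}

/-- `N_Γ = sup{n : Γ_n ≤ cn}` (with `sup ∅ = 0`). -/
def NG (E : ℕ → Ω → ℝ) (c : ℝ) (ω : Ω) : ℕ :=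
  sSup (recordSetG E c ω)

/-- `N_a = ⌊(Γ_1 exp(C) / (c · min_{1 ≤ i ≤ N} V_1(x_i)))^{1/(1−a)}⌋`. -/
def Na (E : ℕ → Ω → ℝ) (Vs : ℕ → Ω → Fin N → ℝ) (a c Creg : ℝ) (ω : Ω) : ℕ :=
  Nat.floor ((arrivals E 1 ω * Real.exp Creg / (c * ⨅ k, Vs 0 ω k)) ^ (1 / (1 - a)))


private lemma pos_ciInf_of_forall {ι : Type*} [Nonempty ι] [Finite ι] {f : ι → ℝ}
    (h : ∀ i, 0 < f i) : 0 < ⨅ i, f i := by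
  obtain ⟨i0, hi0⟩ := Finite.exists_min f
  exact lt_of_lt_of_le (h i0) (le_ciInf hi0)

private lemma key_det [NeZero N] (E : ℕ → Ω → ℝ) (Vs : ℕ → Ω → Fin N → ℝ)
    (a c Creg : ℝ) (ha1 : a < 1) (hc0 : 0 < c)
    (ω : Ω) (hE : ∀ j, 0 < E j ω) (hm : 0 < ⨅ k, Vs 0 ω k)
    (hX : BddAbove (recordSetX Vs a Creg ω)) (hG : BddAbove (recordSetG E c ω)) :
    ∀ (n : ℕ) (k : Fin N),
      max (NX Vs a Creg ω) (max (NG E c ω) (Na E Vs a c Creg ω)) < n →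
      (arrivals E n ω)⁻¹ * Vs (n - 1) ω k <
        (arrivals E 1 ω)⁻¹ * ⨅ i, Vs 0 ω i := by
  intro n k hn
  have hX' : NX Vs a Creg ω < n := lt_of_le_of_lt (le_max_left _ _) hn
  have hG' : NG E c ω < n := lt_of_le_of_lt ((le_max_left _ _).trans (le_max_right _ _)) hn
  have hA' : Na E Vs a c Creg ω < n :=
    lt_of_le_of_lt ((le_max_right _ _).trans (le_max_right _ _)) hn
  have npos : 0 < n := lt_of_le_of_lt (Nat.zero_le _) hn
  have nposR : (0:ℝ) < n := by exact_mod_cast npos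
  set m : ℝ := ⨅ i, Vs 0 ω i with hmdef
  set g1 : ℝ := arrivals E 1 ω with hg1def
  have hg1 : 0 < g1 := by
    simp only [hg1def, arrivals, Finset.range_one, Finset.sum_singleton]
    exact hE 0
  have hVle : Vs (n - 1) ω k ≤ (n:ℝ) ^ a * Real.exp Creg := by
    by_contra hlt
    push_neg at hlt
    have hmem : n ∈ recordSetX Vs a Creg ω :=
      ⟨npos, lt_of_lt_of_le hlt (le_ciSup (Set.Finite.bddAbove (Set.finite_range _)) k)⟩
    exact absurd (le_csSup hX hmem) (not_le.mpr hX')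
  have hGn : c * n < arrivals E n ω := by
    by_contra hle
    push_neg at hle
    exact absurd (le_csSup hG ⟨npos, hle⟩) (not_le.mpr hG')
  have hgn : 0 < arrivals E n ω := lt_trans (mul_pos hc0 nposR) hGn
  have h1a : (0:ℝ) < 1 - a := by linarith
  have hx0 : 0 < g1 * Real.exp Creg / (c * m) :=
    div_pos (mul_pos hg1 (Real.exp_pos _)) (mul_pos hc0 hm)
  have hylt : (g1 * Real.exp Creg / (c * m)) ^ (1 / (1 - a)) < (n : ℝ) := by
    have h1 := Nat.lt_floor_add_one ((g1 * Real.exp Creg / (c * m)) ^ (1 / (1 - a)))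
    have h2 : (Na E Vs a c Creg ω : ℝ) + 1 ≤ n := by exact_mod_cast hA'
    exact lt_of_lt_of_le h1 h2
  have hkey : g1 * Real.exp Creg / (c * m) < (n:ℝ) ^ (1 - a) := by
    have heq : g1 * Real.exp Creg / (c * m) =
        ((g1 * Real.exp Creg / (c * m)) ^ (1 / (1 - a))) ^ (1 - a) := by
      rw [← Real.rpow_mul hx0.le, one_div_mul_cancel h1a.ne', Real.rpow_one]
    calc g1 * Real.exp Creg / (c * m)
        = ((g1 * Real.exp Creg / (c * m)) ^ (1 / (1 - a))) ^ (1 - a) := heq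
      _ < (n:ℝ) ^ (1 - a) :=
          Real.rpow_lt_rpow (Real.rpow_nonneg hx0.le _) hylt h1a
  have hna : (0:ℝ) < (n:ℝ) ^ a := Real.rpow_pos_of_pos nposR a
  have hsplit : (n:ℝ) ^ (1 - a) = (n:ℝ) / (n:ℝ) ^ a := by
    rw [Real.rpow_sub nposR, Real.rpow_one]
  rw [hsplit] at hkey
  have hcross : g1 * Real.exp Creg * (n:ℝ) ^ a < (n:ℝ) * (c * m) :=
    (div_lt_div_iff₀ (mul_pos hc0 hm) hna).mp hkey
  have step1 : (arrivals E n ω)⁻¹ * Vs (n - 1) ω k ≤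
      (arrivals E n ω)⁻¹ * ((n:ℝ) ^ a * Real.exp Creg) :=
    mul_le_mul_of_nonneg_left hVle (inv_nonneg.mpr hgn.le)
  have step2 : (arrivals E n ω)⁻¹ * ((n:ℝ) ^ a * Real.exp Creg) <
      (c * n)⁻¹ * ((n:ℝ) ^ a * Real.exp Creg) := by
    apply mul_lt_mul_of_pos_right _ (mul_pos hna (Real.exp_pos _))
    exact inv_strictAnti₀ (mul_pos hc0 nposR) hGn
  have step3 : (c * n)⁻¹ * ((n:ℝ) ^ a * Real.exp Creg) < g1⁻¹ * m := by
    rw [inv_mul_eq_div, inv_mul_eq_div, div_lt_div_iff₀ (mul_pos hc0 nposR) hg1]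
    nlinarith [hcross]
  exact lt_of_le_of_lt step1 (lt_trans step2 step3)

/-- Record breakers (Liu–Blanchet–Dieker–Mikosch): if
`min_{1 ≤ i ≤ N} V(x_i) > 0` almost surely and `N_X`, `N_Γ` are almost surely finite,
then almost surely every `n > max{N_X, N_Γ, N_a}` satisfies
`Γ_n⁻¹ V_n(x_i) < Γ_1⁻¹ min_{1 ≤ i' ≤ N} V_1(x_{i'})` for all `i`; consequently, with
`M = max{N_X, N_Γ, N_a, 1}`, almost surely `Z^{(M)}(x_i) = Z(x_i)` for all `i`. -/
theorem record_breakers_exact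
    (μ : Measure Ω) [IsProbabilityMeasure μ] [NeZero N]
    (E : ℕ → Ω → ℝ) (hEmeas : ∀ j, Measurable (E j))
    (hEindep : iIndepFun E μ)
    (hEexp : ∀ j, Measure.map (E j) μ = expMeasure 1)
    (V0 : Ω → Fin N → ℝ) (hV0meas : Measurable V0)
    (hV0nn : ∀ ω k, 0 ≤ V0 ω k)
    (hV0mean : ∀ k, ∫⁻ ω, ENNReal.ofReal (V0 ω k) ∂μ = 1)
    (Vs : ℕ → Ω → Fin N → ℝ) (hVmeas : ∀ j, Measurable (Vs j))
    (hVindep : iIndepFun Vs μ)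
    (hVcopies : ∀ j, IdentDistrib (Vs j) V0 μ μ)
    (hVnn : ∀ j ω k, 0 ≤ Vs j ω k)
    (hEV : IndepFun (fun ω j => E j ω) (fun ω j => Vs j ω) μ)
    (hZfin : ∀ᵐ ω ∂μ, ∀ k, Z E Vs ω k < ⊤)
    (a c Creg : ℝ) (ha0 : 0 < a) (ha1 : a < 1) (hc0 : 0 < c) (hc1 : c < 1) (hC : 0 < Creg)
    (hVpos : ∀ᵐ ω ∂μ, 0 < ⨅ k, V0 ω k)
    (hNXfin : ∀ᵐ ω ∂μ, BddAbove (recordSetX Vs a Creg ω))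
    (hNGfin : ∀ᵐ ω ∂μ, BddAbove (recordSetG E c ω)) :
    ∀ᵐ ω ∂μ,
      (∀ (n : ℕ) (k : Fin N),
          max (NX Vs a Creg ω) (max (NG E c ω) (Na E Vs a c Creg ω)) < n →
          (arrivals E n ω)⁻¹ * Vs (n - 1) ω k <
            (arrivals E 1 ω)⁻¹ * ⨅ i, Vs 0 ω i) ∧
        ∀ k : Fin N,
          Zpart E Vs (max (max (NX Vs a Creg ω) (NG E c ω)) (max (Na E Vs a c Creg ω) 1)) ω k =
            Z E Vs ω k := by
  have hEpos : ∀ᵐ ω ∂μ, ∀ j, 0 < E j ω := by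
    rw [ae_all_iff]
    intro j
    rw [ae_iff]
    have hset : {ω | ¬ 0 < E j ω} = E j ⁻¹' Set.Iic 0 := by
      ext ω; simp [not_lt]
    rw [hset, ← Measure.map_apply (hEmeas j) measurableSet_Iic, hEexp j]
    show gammaMeasure 1 1 (Set.Iic 0) = 0
    rw [gammaMeasure, withDensity_apply _ measurableSet_Iic,
      lintegral_Iic_eq_lintegral_Iio_add_Icc _ (le_refl (0:ℝ)),
      lintegral_gammaPDF_of_nonpos le_rfl, setLIntegral_measure_zero]
    · simp
    · simp
  have hVs0pos : ∀ᵐ ω ∂μ, ∀ k, 0 < Vs 0 ω k := by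
    have pmeas : MeasurableSet {v : Fin N → ℝ | ∀ k, 0 < v k} := by
      have hset : {v : Fin N → ℝ | ∀ k, 0 < v k} =
          ⋂ k, (fun v : Fin N → ℝ => v k) ⁻¹' Set.Ioi 0 := by
        ext v; simp
      rw [hset]
      exact MeasurableSet.iInter fun k => (measurable_pi_apply k) measurableSet_Ioi
    have hp : ∀ᵐ ω ∂μ, ∀ k, 0 < V0 ω k :=
      hVpos.mono fun ω h k =>
        lt_of_lt_of_le h (ciInf_le (Set.Finite.bddBelow (Set.finite_range _)) k)
    exact (hVcopies 0).symm.ae_snd pmeas hp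
  filter_upwards [hEpos, hVs0pos, hNXfin, hNGfin] with ω hE hm0 hX hG
  have hm : 0 < ⨅ k, Vs 0 ω k := pos_ciInf_of_forall hm0
  have hkey := key_det E Vs a c Creg ha1 hc0 ω hE hm hX hG
  refine ⟨hkey, ?_⟩
  intro k
  set M := max (max (NX Vs a Creg ω) (NG E c ω)) (max (Na E Vs a c Creg ω) 1) with hM
  have hM1 : 1 ≤ M := le_max_of_le_right (le_max_right _ _)
  have hMge : max (NX Vs a Creg ω) (max (NG E c ω) (Na E Vs a c Creg ω)) ≤ M :=
    max_le (le_max_of_le_left (le_max_left _ _))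
      (max_le (le_max_of_le_left (le_max_right _ _)) (le_max_of_le_right (le_max_left _ _)))
  have hg1 : 0 < arrivals E 1 ω := by
    simp only [arrivals, Finset.range_one, Finset.sum_singleton]
    exact hE 0
  apply le_antisymm
  · exact iSup₂_le fun j _ => le_iSup (fun j => fn E Vs j ω k) j
  · apply iSup_le
    intro j
    by_cases hj : j < M
    · exact le_iSup₂ (f := fun j (_ : j ∈ Finset.range M) => fn E Vs j ω k) j
        (Finset.mem_range.mpr hj)
    · push_neg at hj
      have hlt := hkey (j + 1) k (lt_of_le_of_lt (hMge.trans hj) (Nat.lt_succ_self j))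
      have h1 : fn E Vs j ω k ≤ fn E Vs 0 ω k := by
        apply ENNReal.ofReal_le_ofReal
        refine le_trans hlt.le ?_
        exact mul_le_mul_of_nonneg_left
          (ciInf_le (Set.Finite.bddBelow (Set.finite_range _)) k) (inv_nonneg.mpr hg1.le)
      exact h1.trans (le_iSup₂ (f := fun j (_ : j ∈ Finset.range M) => fn E Vs j ω k) 0
        (Finset.mem_range.mpr hM1))


end MaxStableSimFin
end
end

section
/- For each k ∈ {1,…,N}, the set function P_k(A) = E[ V(x_k) · 1{ V(x_k)^{-1}·(V(x_1),…,V(x_N)) ∈ A } ] defines a probability measure on [0,∞)^N under which the k-th coordinate equals 1 almost surely. Moreover, if Y is a random vector with law (1/N) Σ_{k=1}^N P_k and V' = N·Y / (Σ_{k=1}^N Y_k), then Σ_{k=1}^N V'_k = N almost surely (sum-normalization) and V' is a spectral vector for the same max-stable law: for every z ∈ (0,∞)^N, E[ max_{1≤k≤N} V'_k / z_k ] = E[ max_{1≤k≤N} V(x_k) / z_k ]. -/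
open MeasureTheory ProbabilityTheory
open scoped ENNReal

noncomputable section

namespace SumNormalize

variable {Ω : Type*} [MeasurableSpace Ω] {N : ℕ}

/-- The measure `P_k(A) = E[V(x_k) · 1{V(x_k)⁻¹ · (V(x_1), …, V(x_N)) ∈ A}]` on
`[0,∞)^K`, realized as the pushforward of the `V(x_k)`-tilted measure under the
normalization map (the indicator is `0` on the event `{V(x_k) = 0}`, where the
density vanishes). -/
def Pk (μ : Measure Ω) (V0 : Ω → Fin N → ℝ) (k : Fin N) : Measure (Fin N → ℝ) :=
  (μ.withDensity fun ω => ENNReal.ofReal (V0 ω k)).map fun ω i => (V0 ω k)⁻¹ * V0 ω i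

/-- For each `k`, `P_k` is a probability measure under which the
`k`-th coordinate equals `1` almost surely. Moreover, if `Y` has law
`(1/N) Σ_{k=1}^N P_k` and `V' = N·Y / (Σ_k Y_k)`, then `Σ_k V'_k = N` almost surely
(sum-normalization) and `V'` is a spectral vector for the same max-stable law:
`E[max_k V'_k / z_k] = E[max_k V(x_k) / z_k]` for every `z ∈ (0,∞)^N`. -/
theorem sum_normalized_spectral_process
    (μ : Measure Ω) [IsProbabilityMeasure μ] [NeZero N]
    {Ω' : Type*} [MeasurableSpace Ω'] (μ' : Measure Ω') [IsProbabilityMeasure μ']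
    (V0 : Ω → Fin N → ℝ) (hV0meas : Measurable V0)
    (hV0nn : ∀ ω k, 0 ≤ V0 ω k)
    (hV0mean : ∀ k, ∫⁻ ω, ENNReal.ofReal (V0 ω k) ∂μ = 1)
    (Y : Ω' → Fin N → ℝ) (hYmeas : Measurable Y)
    (hYlaw : Measure.map Y μ' = (N : ℝ≥0∞)⁻¹ • ∑ k : Fin N, Pk μ V0 k) :
    (∀ k, IsProbabilityMeasure (Pk μ V0 k)) ∧
      (∀ k : Fin N, Pk μ V0 k {v | v k = 1} = 1) ∧
      (∀ᵐ ω' ∂μ', ∑ k, (N : ℝ) * Y ω' k / (∑ k', Y ω' k') = (N : ℝ)) ∧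
      ∀ z : Fin N → ℝ, (∀ k, 0 < z k) →
        ∫⁻ ω', ⨆ k, ENNReal.ofReal (((N : ℝ) * Y ω' k / (∑ k', Y ω' k')) / z k) ∂μ' =
          ∫⁻ ω, ⨆ k, ENNReal.ofReal (V0 ω k / z k) ∂μ := by
  -- basic measurability facts
  have hVk : ∀ k, Measurable fun ω => V0 ω k := fun k => (measurable_pi_apply k).comp hV0meas
  have hT : ∀ k, Measurable fun ω (i : Fin N) => (V0 ω k)⁻¹ * V0 ω i := fun k =>
    measurable_pi_lambda _ fun i => ((hVk k).inv.mul (hVk i))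
  have hdens : ∀ k, Measurable fun ω => ENNReal.ofReal (V0 ω k) := fun k =>
    ENNReal.measurable_ofReal.comp (hVk k)
  -- the tilted measures are probability measures
  have hwd : ∀ k, IsProbabilityMeasure (μ.withDensity fun ω => ENNReal.ofReal (V0 ω k)) := by
    intro k
    constructor
    rw [withDensity_apply _ MeasurableSet.univ, Measure.restrict_univ]
    exact hV0mean k
  have hProb : ∀ k, IsProbabilityMeasure (Pk μ V0 k) := fun k =>
    haveI := hwd k
    Measure.isProbabilityMeasure_map (hT k).aemeasurable
  -- the tilted measure vanishes on subsets of `{V0 · k = 0}`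
  have hnull : ∀ k (s : Set Ω), s ⊆ {ω | V0 ω k = 0} →
      (μ.withDensity fun ω => ENNReal.ofReal (V0 ω k)) s = 0 := by
    intro k s hs
    have hms : MeasurableSet {ω | V0 ω k = 0} := (hVk k) (measurableSet_singleton 0)
    refine measure_mono_null hs ?_
    rw [withDensity_apply _ hms]
    have : ∀ᵐ ω ∂μ.restrict {ω | V0 ω k = 0}, ENNReal.ofReal (V0 ω k) = 0 := by
      refine (ae_restrict_iff' hms).2 (Filter.Eventually.of_forall fun ω hω => ?_)
      have : V0 ω k = 0 := hω
      simp [this]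
    rw [lintegral_congr_ae this, lintegral_zero]
  refine ⟨hProb, ?_, ?_, ?_⟩
  · -- k-th coordinate equals 1 a.s.
    intro k
    haveI := hProb k
    have hms : MeasurableSet {v : Fin N → ℝ | v k = 1} :=
      (measurable_pi_apply k) (measurableSet_singleton 1)
    rw [← prob_compl_eq_zero_iff hms]
    rw [Pk, Measure.map_apply (hT k) hms.compl]
    refine hnull k _ fun ω hω => ?_
    simp only [Set.preimage_compl, Set.mem_compl_iff, Set.mem_preimage, Set.mem_setOf_eq] at hω ⊢
    by_contra h0
    exact hω (inv_mul_cancel₀ h0)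
  · -- sum normalization a.s.
    have hB : MeasurableSet {v : Fin N → ℝ | ∑ k, v k = 0} :=
      (Finset.measurable_sum Finset.univ fun i _ => measurable_pi_apply i)
        (measurableSet_singleton 0)
    have hzero : μ' {ω' | ∑ k, Y ω' k = 0} = 0 := by
      have : μ' {ω' | ∑ k, Y ω' k = 0} = Measure.map Y μ' {v | ∑ k, v k = 0} := by
        rw [Measure.map_apply hYmeas hB]; rfl
      rw [this, hYlaw, Measure.smul_apply, Measure.finset_sum_apply]
      have hPk0 : ∀ j, Pk μ V0 j {v : Fin N → ℝ | ∑ k, v k = 0} = 0 := by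
        intro j
        rw [Pk, Measure.map_apply (hT j) hB]
        refine hnull j _ fun ω hω => ?_
        simp only [Set.mem_preimage, Set.mem_setOf_eq] at hω ⊢
        by_contra h0
        have hsum : ∀ i ∈ Finset.univ, (0:ℝ) ≤ (V0 ω j)⁻¹ * V0 ω i := fun i _ =>
          mul_nonneg (inv_nonneg.2 (hV0nn ω j)) (hV0nn ω i)
        have := (Finset.sum_eq_zero_iff_of_nonneg hsum).1 hω j (Finset.mem_univ j)
        rw [inv_mul_cancel₀ h0] at this
        exact one_ne_zero this
      simp [hPk0]
    rw [ae_iff]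
    refine measure_mono_null (fun ω' hω' => ?_) hzero
    simp only [Set.mem_setOf_eq] at hω' ⊢
    by_contra hS
    apply hω'
    rw [← Finset.sum_div, ← Finset.mul_sum, mul_div_assoc, div_self hS, mul_one]
  · -- spectral identity
    intro z hz
    set S : Ω → ℝ := fun ω => ∑ i, V0 ω i with hSdef
    have hSmeas : Measurable S := Finset.measurable_sum Finset.univ fun i _ => hVk i
    set g : (Fin N → ℝ) → ℝ≥0∞ :=
      fun v => ⨆ k, ENNReal.ofReal (((N : ℝ) * v k / ∑ k', v k') / z k) with hgdef
    have hgmeas : Measurable g := by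
      refine Measurable.iSup fun k => ENNReal.measurable_ofReal.comp ?_
      exact (((measurable_const.mul (measurable_pi_apply k)).div
        (Finset.measurable_sum Finset.univ fun i _ => measurable_pi_apply i)).div measurable_const)
    set h : Ω → ℝ≥0∞ :=
      fun ω => ⨆ k, ENNReal.ofReal (((N : ℝ) * V0 ω k / S ω) / z k) with hhdef
    have hhmeas : Measurable h := by
      refine Measurable.iSup fun k => ENNReal.measurable_ofReal.comp ?_
      exact ((measurable_const.mul (hVk k)).div hSmeas).div measurable_const
    have hmeas2 : Measurable fun ω => ⨆ k, ENNReal.ofReal (V0 ω k / z k) := by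
      refine Measurable.iSup fun k => ENNReal.measurable_ofReal.comp ?_
      exact (hVk k).div measurable_const
    -- rewrite LHS through the law of Y
    have lhs1 : ∫⁻ ω', ⨆ k, ENNReal.ofReal (((N : ℝ) * Y ω' k / (∑ k', Y ω' k')) / z k) ∂μ'
        = ∫⁻ v, g v ∂(Measure.map Y μ') := (lintegral_map hgmeas hYmeas).symm
    rw [lhs1, hYlaw, lintegral_smul_measure, lintegral_finset_sum_measure]
    -- compute each ∫⁻ g dP_j
    have key : ∀ j : Fin N, ∫⁻ v, g v ∂(Pk μ V0 j)
        = ∫⁻ ω, ENNReal.ofReal (V0 ω j) * h ω ∂μ := by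
      intro j
      have hgc : Measurable fun ω => g (fun i => (V0 ω j)⁻¹ * V0 ω i) := hgmeas.comp (hT j)
      rw [Pk, lintegral_map hgmeas (hT j),
        lintegral_withDensity_eq_lintegral_mul μ (hdens j) hgc]
      refine lintegral_congr fun ω => ?_
      simp only [Pi.mul_apply, Function.comp_apply]
      rcases eq_or_lt_of_le (hV0nn ω j) with hc | hc
      · simp [← hc]
      · have hcne : V0 ω j ≠ 0 := ne_of_gt hc
        congr 1
        simp only [hgdef, hhdef]
        refine iSup_congr fun k => ?_
        congr 2
        have hsum : ∑ k', (V0 ω j)⁻¹ * V0 ω k' = (V0 ω j)⁻¹ * S ω := by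
          rw [hSdef, Finset.mul_sum]
        rw [hsum]
        rw [show (N : ℝ) * ((V0 ω j)⁻¹ * V0 ω k) = (V0 ω j)⁻¹ * ((N:ℝ) * V0 ω k) by ring]
        rw [mul_div_mul_left _ _ (inv_ne_zero hcne)]
    simp only [key]
    rw [← lintegral_finset_sum (f := fun j ω => ENNReal.ofReal (V0 ω j) * h ω) _
      fun j _ => (hdens j).mul hhmeas]
    -- pointwise: ∑_j ofReal(V0 j) * h = N * ⨆ ofReal (V0 k / z k)
    have point : ∀ ω, ∑ j, ENNReal.ofReal (V0 ω j) * h ω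
        = (N : ℝ≥0∞) * ⨆ k, ENNReal.ofReal (V0 ω k / z k) := by
      intro ω
      have hsum : ∑ j, ENNReal.ofReal (V0 ω j) * h ω = ENNReal.ofReal (S ω) * h ω := by
        rw [← Finset.sum_mul, ← ENNReal.ofReal_sum_of_nonneg fun i _ => hV0nn ω i]
      rw [hsum]
      have hSnn : 0 ≤ S ω := Finset.sum_nonneg fun i _ => hV0nn ω i
      rcases eq_or_lt_of_le hSnn with hS0 | hSpos
      · -- S ω = 0 : all coordinates vanish
        have hall : ∀ i, V0 ω i = 0 := by
          intro i
          exact (Finset.sum_eq_zero_iff_of_nonneg fun i _ => hV0nn ω i).1 hS0.symm i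
            (Finset.mem_univ i)
        simp [← hS0, hhdef, hall]
      · have hSne : S ω ≠ 0 := ne_of_gt hSpos
        rw [hhdef]
        rw [ENNReal.mul_iSup]
        have : ∀ k, ENNReal.ofReal (S ω) * ENNReal.ofReal (((N:ℝ) * V0 ω k / S ω) / z k)
            = (N : ℝ≥0∞) * ENNReal.ofReal (V0 ω k / z k) := by
          intro k
          rw [← ENNReal.ofReal_mul hSnn]
          have : S ω * ((N:ℝ) * V0 ω k / S ω / z k) = (N:ℝ) * (V0 ω k / z k) := by
            rw [div_div, mul_div_assoc', mul_div_mul_left _ _ hSne, mul_div_assoc]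
          rw [this, ENNReal.ofReal_mul (by positivity), ENNReal.ofReal_natCast]
        simp only [this]
        rw [← ENNReal.mul_iSup]
    simp only [point]
    rw [lintegral_const_mul _ hmeas2, smul_eq_mul, ← mul_assoc,
      ENNReal.inv_mul_cancel (by exact_mod_cast (NeZero.ne N)) (by simp), one_mul]

end SumNormalize
end
end

section
/- Assume θ = E[ sup_{x∈K} V(x) ] ∈ (0,∞). Then A ↦ θ^{-1} E[ (sup_{x∈K} V(x)) · 1{V ∈ A} ] defines a probability measure on C(K); if Y is a random element of C(K) with this law, then sup_{x∈K} Y(x) > 0 almost surely, and the sup-normalized process V^∞ = θ · Y / sup_{x∈K} Y satisfies: (i) sup_{x∈K} V^∞(x) = θ almost surely; (ii) E[V^∞(x)] = 1 for all x ∈ K; and (iii) for every finite subset {y_1,…,y_m} ⊆ K and every z ∈ (0,∞)^m, E[ max_{1≤i≤m} V^∞(y_i)/z_i ] = E[ max_{1≤i≤m} V(y_i)/z_i ], so V^∞ is a spectral process for the same max-stable process. -/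
open MeasureTheory ProbabilityTheory
open scoped ENNReal

noncomputable section

namespace SupNormalize

variable {Ω : Type*} [MeasurableSpace Ω]
variable {K : Type*} [MetricSpace K] [CompactSpace K] [Nonempty K]
variable [MeasurableSpace C(K, ℝ)]

/-- The probability measure `A ↦ θ⁻¹ E[(sup_{x ∈ K} V(x)) · 1{V ∈ A}]` on `C(K)`,
realized as the pushforward of the `sup V`-tilted measure under `V`. -/
def supTilt (μ : Measure Ω) (V0 : Ω → C(K, ℝ)) (θ : ℝ) : Measure C(K, ℝ) :=
  (ENNReal.ofReal θ)⁻¹ • (μ.withDensity fun ω => ⨆ x, ENNReal.ofReal (V0 ω x)).map V0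

/-! ### Auxiliary lemmas -/

lemma bddAbove_range_cm (f : C(K, ℝ)) : BddAbove (Set.range f) :=
  (isCompact_range f.continuous).bddAbove

/-- The supremum functional on `C(K, ℝ)`. -/
def supFun (f : C(K, ℝ)) : ℝ := ⨆ x, f x

lemma sup_le_sup_add (f g : C(K, ℝ)) : supFun f ≤ supFun g + dist f g := by
  refine ciSup_le fun x => ?_
  have h1 : dist (f x) (g x) ≤ dist f g := ContinuousMap.dist_apply_le_dist x
  have h2 : f x - g x ≤ dist f g := (abs_sub_le_iff.mp (by simpa [Real.dist_eq] using h1)).1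
  have h3 : g x ≤ supFun g := le_ciSup (bddAbove_range_cm g) x
  linarith

lemma continuous_supFun : Continuous (supFun (K := K)) := by
  have : LipschitzWith 1 (supFun (K := K)) := by
    apply LipschitzWith.of_dist_le_mul
    intro f g
    rw [NNReal.coe_one, one_mul, Real.dist_eq, abs_sub_le_iff]
    constructor
    · have := sup_le_sup_add f g
      linarith
    · have := sup_le_sup_add g f
      rw [dist_comm g f] at this
      linarith
  exact this.continuous

lemma ofReal_iSup_cm (f : C(K, ℝ)) :
    (⨆ x, ENNReal.ofReal (f x)) = ENNReal.ofReal (supFun f) :=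
  (Monotone.map_ciSup_of_continuousAt (ENNReal.continuous_ofReal.continuousAt)
    (fun _ _ h => ENNReal.ofReal_le_ofReal h) (bddAbove_range_cm f)).symm

/-- Assume `θ = E[sup_{x ∈ K} V(x)] ∈ (0,∞)`. Then
`A ↦ θ⁻¹ E[(sup_x V(x)) · 1{V ∈ A}]` is a probability measure on `C(K)`; if `Y` has
this law then `sup_{x ∈ K} Y(x) > 0` almost surely, and the sup-normalized process
`V^∞ = θ · Y / sup_{x ∈ K} Y` satisfies (i) `sup_x V^∞(x) = θ` almost surely,
(ii) `E[V^∞(x)] = 1` for all `x`, and (iii) for all `y_1, …, y_m ∈ K` and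
`z ∈ (0,∞)^m`, `E[max_i V^∞(y_i)/z_i] = E[max_i V(y_i)/z_i]`, so `V^∞` is a spectral
process for the same max-stable process. -/
theorem sup_normalized_spectral_process
    (μ : Measure Ω) [IsProbabilityMeasure μ] [BorelSpace C(K, ℝ)]
    {Ω' : Type*} [MeasurableSpace Ω'] (μ' : Measure Ω') [IsProbabilityMeasure μ']
    (V0 : Ω → C(K, ℝ)) (hV0meas : Measurable V0)
    (hV0nn : ∀ ω x, 0 ≤ V0 ω x)
    (hV0mean : ∀ x, ∫⁻ ω, ENNReal.ofReal (V0 ω x) ∂μ = 1)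
    (θ : ℝ) (hθpos : 0 < θ)
    (hθ : ∫⁻ ω, ⨆ x, ENNReal.ofReal (V0 ω x) ∂μ = ENNReal.ofReal θ)
    (Y : Ω' → C(K, ℝ)) (hYmeas : Measurable Y)
    (hYlaw : Measure.map Y μ' = supTilt μ V0 θ) :
    IsProbabilityMeasure (supTilt μ V0 θ) ∧
      (∀ᵐ ω' ∂μ', 0 < ⨆ x, Y ω' x) ∧
      (∀ᵐ ω' ∂μ', (⨆ x, θ * Y ω' x / ⨆ x', Y ω' x') = θ) ∧
      (∀ x, ∫⁻ ω', ENNReal.ofReal (θ * Y ω' x / ⨆ x', Y ω' x') ∂μ' = 1) ∧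
      ∀ (m : ℕ) (y : Fin m → K) (z : Fin m → ℝ), (∀ i, 0 < z i) →
        ∫⁻ ω', ⨆ i, ENNReal.ofReal ((θ * Y ω' (y i) / ⨆ x', Y ω' x') / z i) ∂μ' =
          ∫⁻ ω, ⨆ i, ENNReal.ofReal (V0 ω (y i) / z i) ∂μ := by
  classical
  have hsM : Measurable (supFun (K := K)) := continuous_supFun.measurable
  have hSrw : (fun ω => ⨆ x, ENNReal.ofReal (V0 ω x))
      = fun ω => ENNReal.ofReal (supFun (V0 ω)) := funext fun ω => ofReal_iSup_cm (V0 ω)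
  have hSmeas : Measurable fun f : C(K, ℝ) => ENNReal.ofReal (supFun f) :=
    ENNReal.measurable_ofReal.comp hsM
  have hθ0 : ENNReal.ofReal θ ≠ 0 := by
    simp [ENNReal.ofReal_eq_zero, not_le, hθpos]
  have hθtop : ENNReal.ofReal θ ≠ ⊤ := ENNReal.ofReal_ne_top
  have hMnn : ∀ ω, 0 ≤ supFun (V0 ω) := fun ω =>
    le_trans (hV0nn ω (Classical.arbitrary K)) (le_ciSup (bddAbove_range_cm _) _)
  have hMzero : ∀ ω x, supFun (V0 ω) = 0 → V0 ω x = 0 := fun ω x h0 =>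
    le_antisymm (h0 ▸ le_ciSup (bddAbove_range_cm (V0 ω)) x) (hV0nn ω x)
  -- the key change-of-variables identity
  have key : ∀ F : C(K, ℝ) → ℝ≥0∞, Measurable F →
      ∫⁻ ω', F (Y ω') ∂μ'
        = (ENNReal.ofReal θ)⁻¹ * ∫⁻ ω, ENNReal.ofReal (supFun (V0 ω)) * F (V0 ω) ∂μ := by
    intro F hF
    calc ∫⁻ ω', F (Y ω') ∂μ' = ∫⁻ f, F f ∂(Measure.map Y μ') := (lintegral_map hF hYmeas).symm
      _ = (ENNReal.ofReal θ)⁻¹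
          * ∫⁻ f, F f ∂((μ.withDensity fun ω => ⨆ x, ENNReal.ofReal (V0 ω x)).map V0) := by
          rw [hYlaw, supTilt, lintegral_smul_measure, smul_eq_mul]
      _ = (ENNReal.ofReal θ)⁻¹
          * ∫⁻ ω, F (V0 ω) ∂(μ.withDensity fun ω => ⨆ x, ENNReal.ofReal (V0 ω x)) := by
          rw [lintegral_map hF hV0meas]
      _ = _ := by
          have hd : Measurable fun ω => ENNReal.ofReal (supFun (V0 ω)) := hSmeas.comp hV0meas
          have hg : Measurable fun ω => F (V0 ω) := hF.comp hV0meas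
          rw [hSrw, lintegral_withDensity_eq_lintegral_mul μ hd hg]
          rfl
  -- the pointwise identity
  have point : ∀ (M b : ℝ), 0 ≤ M → 0 ≤ b → (M = 0 → b = 0) →
      ENNReal.ofReal M * ENNReal.ofReal (θ * b / M)
        = ENNReal.ofReal θ * ENNReal.ofReal b := by
    intro M b hM hb himp
    rcases eq_or_lt_of_le hM with h0 | h0
    · rw [← h0, himp h0.symm]
      simp
    · have hMb : M * (θ * b / M) = θ * b := by field_simp
      rw [← ENNReal.ofReal_mul h0.le, hMb, ENNReal.ofReal_mul hθpos.le]
  -- (0) probability measure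
  have hprob : IsProbabilityMeasure (supTilt μ V0 θ) := by
    constructor
    rw [supTilt, Measure.smul_apply, Measure.map_apply hV0meas MeasurableSet.univ,
      Set.preimage_univ, withDensity_apply _ MeasurableSet.univ, Measure.restrict_univ, hθ,
      smul_eq_mul, ENNReal.inv_mul_cancel hθ0 hθtop]
  -- (1) a.s. positivity of the sup
  have hApos : MeasurableSet {f : C(K, ℝ) | supFun f ≤ 0} :=
    measurableSet_le hsM measurable_const
  have hpos : ∀ᵐ ω' ∂μ', 0 < ⨆ x, Y ω' x := by
    rw [ae_iff]
    have hset : {ω' | ¬ 0 < ⨆ x, Y ω' x} = Y ⁻¹' {f | supFun f ≤ 0} := by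
      ext ω'
      simp only [Set.mem_setOf_eq, not_lt, Set.mem_preimage]
      exact Iff.rfl
    have hzero : ∫⁻ ω in V0 ⁻¹' {f | supFun f ≤ 0}, (⨆ x, ENNReal.ofReal (V0 ω x)) ∂μ = 0 := by
      rw [hSrw, setLIntegral_congr_fun (hV0meas hApos)
        (fun ω hω => show ENNReal.ofReal (supFun (V0 ω)) = (fun _ => 0) ω from
          ENNReal.ofReal_eq_zero.mpr hω)]
      simp
    rw [hset, ← Measure.map_apply hYmeas hApos, hYlaw, supTilt, Measure.smul_apply,
      Measure.map_apply hV0meas hApos, withDensity_apply _ (hV0meas hApos), hzero,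
      smul_eq_mul, mul_zero]
  refine ⟨hprob, hpos, ?_, ?_, ?_⟩
  -- (2) sup of the normalized process equals θ a.s.
  · filter_upwards [hpos] with ω' hω'
    have hsnn : (0 : ℝ) < ⨆ x', Y ω' x' := hω'
    have h1 : (⨆ x, θ * Y ω' x / ⨆ x', Y ω' x')
        = ⨆ x, Y ω' x * (θ / ⨆ x', Y ω' x') := by
      refine iSup_congr fun x => ?_
      ring
    rw [h1, ← Real.iSup_mul_of_nonneg (div_nonneg hθpos.le hsnn.le)]
    rw [mul_div_assoc']
    rw [mul_comm, mul_div_assoc, div_self hsnn.ne', mul_one]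
  -- (3) unit mean
  · intro x
    have hF : Measurable fun f : C(K, ℝ) => ENNReal.ofReal (θ * f x / supFun f) :=
      ENNReal.measurable_ofReal.comp
        ((measurable_const.mul (continuous_eval_const x).measurable).div hsM)
    have h := key _ hF
    have h2 : ∫⁻ ω, ENNReal.ofReal (supFun (V0 ω))
        * ENNReal.ofReal (θ * V0 ω x / supFun (V0 ω)) ∂μ = ENNReal.ofReal θ := by
      have : ∀ ω, ENNReal.ofReal (supFun (V0 ω)) * ENNReal.ofReal (θ * V0 ω x / supFun (V0 ω))
          = ENNReal.ofReal θ * ENNReal.ofReal (V0 ω x) := fun ω =>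
        point _ _ (hMnn ω) (hV0nn ω x) (hMzero ω x)
      have hg : Measurable fun ω => ENNReal.ofReal (V0 ω x) :=
        ENNReal.measurable_ofReal.comp
          ((continuous_eval_const x).measurable.comp hV0meas)
      rw [lintegral_congr this, lintegral_const_mul _ hg, hV0mean x, mul_one]
    show ∫⁻ ω', (fun f : C(K, ℝ) => ENNReal.ofReal (θ * f x / supFun f)) (Y ω') ∂μ' = 1
    rw [h, h2, ENNReal.inv_mul_cancel hθ0 hθtop]
  -- (4) same exponent functionals
  · intro m y z hz
    have hF : Measurable fun f : C(K, ℝ) =>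
        ⨆ i, ENNReal.ofReal ((θ * f (y i) / supFun f) / z i) := by
      refine Measurable.iSup fun i => ?_
      exact ENNReal.measurable_ofReal.comp
        (((measurable_const.mul
          (continuous_eval_const (y i)).measurable).div hsM).div_const _)
    have hmeasR : Measurable fun ω => ⨆ i, ENNReal.ofReal (V0 ω (y i) / z i) := by
      refine Measurable.iSup fun i => ?_
      exact ENNReal.measurable_ofReal.comp
        (((continuous_eval_const (y i)).measurable.comp hV0meas).div_const _)
    have hpt : ∀ ω, ENNReal.ofReal (supFun (V0 ω))
        * (⨆ i, ENNReal.ofReal ((θ * V0 ω (y i) / supFun (V0 ω)) / z i))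
        = ENNReal.ofReal θ * ⨆ i, ENNReal.ofReal (V0 ω (y i) / z i) := by
      intro ω
      rw [ENNReal.mul_iSup, ENNReal.mul_iSup]
      refine iSup_congr fun i => ?_
      have h1 : (θ * V0 ω (y i) / supFun (V0 ω)) / z i
          = θ * (V0 ω (y i) / z i) / supFun (V0 ω) := by ring
      rw [h1]
      exact point _ _ (hMnn ω) (div_nonneg (hV0nn ω (y i)) (hz i).le)
        (fun h0 => by rw [hMzero ω (y i) h0, zero_div])
    have h := key _ hF
    show ∫⁻ ω', (fun f : C(K, ℝ) =>
        ⨆ i, ENNReal.ofReal ((θ * f (y i) / supFun f) / z i)) (Y ω') ∂μ' = _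
    rw [h, lintegral_congr hpt, lintegral_const_mul _ hmeasR, ← mul_assoc,
      ENNReal.inv_mul_cancel hθ0 hθtop, one_mul]

end SupNormalize
end
end
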